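/- Let N ∈ ℕ, θ ∈ (1, ∞), λ ∈ (0,1), and let φ_λ : ℝ^N → ℝ_{>0} satisfy φ_λ(x) ≤ C₁ (1+λ|x|)^{−(N−1)/2} e^{λ|x|} for all x with a constant C₁ ≥ 1. Then there exist C = C(N, θ, C₁) > 1 and R₀ = R₀(N, θ, λ) > 0 such that for all R ≥ R₀: ∫_{|x| < R} φ_λ(x)^θ dx ≤ C λ^{−(N−1)θ/2 − 1} (1 + R)^{N−1−(N−1)θ/2} e^{λ θ R}. -/

import Mathlib

open MeasureTheory Real Metric Set

lemma aux_R0 (p c : ℝ) (hc : 0 < c) :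
    ∃ R₀ : ℝ, 1 ≤ R₀ ∧ ∀ R ≥ R₀, (1+R) ^ p ≤ Real.exp (c * R) := by
  have h0 : Filter.Tendsto (fun x : ℝ => x ^ p * Real.exp (-c * x)) Filter.atTop (nhds 0) :=
    tendsto_rpow_mul_exp_neg_mul_atTop_nhds_zero p c hc
  have h1 : Filter.Tendsto (fun R : ℝ => (1+R) ^ p * Real.exp (-c * (1+R))) Filter.atTop (nhds 0) :=
    h0.comp (Filter.tendsto_atTop_add_const_left _ 1 Filter.tendsto_id)
  have h2 : ∀ᶠ R : ℝ in Filter.atTop, (1+R) ^ p * Real.exp (-c * (1+R)) < Real.exp (-c) :=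
    h1.eventually (gt_mem_nhds (Real.exp_pos (-c)))
  obtain ⟨M, hM⟩ := h2.exists_forall_of_atTop
  refine ⟨max 1 M, le_max_left _ _, fun R hR => ?_⟩
  have h3 := hM R (le_trans (le_max_right 1 M) hR)
  have h4 : (0:ℝ) < Real.exp (-c * (1+R)) := Real.exp_pos _
  have h5 : (1+R) ^ p < Real.exp (-c) / Real.exp (-c * (1+R)) := by
    rw [lt_div_iff₀ h4]; exact h3
  calc (1+R) ^ p ≤ Real.exp (-c) / Real.exp (-c * (1+R)) := h5.le
    _ = Real.exp (c * R) := by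
        rw [← Real.exp_sub]; ring_nf

lemma aux_ball_exp (N : ℕ) (hN : 1 ≤ N) (b R : ℝ) (hb : 0 < b) (hR : 0 < R) :
    ∫ x in Metric.ball (0 : EuclideanSpace ℝ (Fin N)) R, Real.exp (b * ‖x‖) ≤
      N * (volume (Metric.ball (0 : EuclideanSpace ℝ (Fin N)) 1)).toReal * R ^ (N-1) *
        Real.exp (b * R) / b := by
  haveI : Nontrivial (EuclideanSpace ℝ (Fin N)) :=
    Module.nontrivial_of_finrank_pos (R := ℝ) (by rw [finrank_euclideanSpace_fin]; omega)
  set κ := (volume (Metric.ball (0 : EuclideanSpace ℝ (Fin N)) 1)).toReal with hκ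
  have hκ0 : 0 ≤ κ := ENNReal.toReal_nonneg
  set f : ℝ → ℝ := Set.indicator (Set.Iio R) (fun r => Real.exp (b * r)) with hf
  have hdim : Module.finrank ℝ (EuclideanSpace ℝ (Fin N)) = N := finrank_euclideanSpace_fin
  have step1 : ∫ x in Metric.ball (0 : EuclideanSpace ℝ (Fin N)) R, Real.exp (b * ‖x‖) =
      ∫ x : EuclideanSpace ℝ (Fin N), f ‖x‖ := by
    rw [← integral_indicator measurableSet_ball]
    congr 1
    funext x
    classical
    rw [hf, Set.indicator_apply, Set.indicator_apply]
    simp only [Set.mem_Iio, mem_ball_zero_iff]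
  have step2 := MeasureTheory.integral_fun_norm_addHaar (volume : Measure (EuclideanSpace ℝ (Fin N))) f
  rw [step1, step2, hdim]
  have step3 : (fun y : ℝ => y ^ (N-1) • f y) =
      Set.indicator (Set.Iio R) (fun y => y ^ (N-1) * Real.exp (b * y)) := by
    funext y
    simp [hf, Set.indicator_apply, Set.mem_Iio]
  have step4 : ∫ y in Set.Ioi (0:ℝ), y ^ (N-1) • f y =
      ∫ y in Set.Ioo (0:ℝ) R, y ^ (N-1) * Real.exp (b * y) := by
    rw [step3, setIntegral_indicator measurableSet_Iio, Set.Ioi_inter_Iio]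
  rw [step4, nsmul_eq_mul, smul_eq_mul]
  have hcont1 : Continuous (fun y : ℝ => y ^ (N-1) * Real.exp (b * y)) := by continuity
  have hcont2 : Continuous (fun y : ℝ => R ^ (N-1) * Real.exp (b * y)) := by continuity
  have hint1 : IntegrableOn (fun y : ℝ => y ^ (N-1) * Real.exp (b * y)) (Set.Ioo 0 R) :=
    (hcont1.integrableOn_Icc (a := 0) (b := R)).mono_set Set.Ioo_subset_Icc_self
  have hint2 : IntegrableOn (fun y : ℝ => R ^ (N-1) * Real.exp (b * y)) (Set.Ioo 0 R) :=
    (hcont2.integrableOn_Icc (a := 0) (b := R)).mono_set Set.Ioo_subset_Icc_self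
  have step5 : ∫ y in Set.Ioo (0:ℝ) R, y ^ (N-1) * Real.exp (b * y) ≤
      ∫ y in Set.Ioo (0:ℝ) R, R ^ (N-1) * Real.exp (b * y) := by
    refine setIntegral_mono_on hint1 hint2 measurableSet_Ioo (fun y hy => ?_)
    exact mul_le_mul_of_nonneg_right (pow_le_pow_left₀ hy.1.le hy.2.le _) (Real.exp_pos _).le
  have step6 : ∫ y in Set.Ioo (0:ℝ) R, R ^ (N-1) * Real.exp (b * y) =
      R ^ (N-1) * ((Real.exp (b * R) - 1) / b) := by
    rw [integral_const_mul]
    congr 1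
    rw [← MeasureTheory.integral_Ioc_eq_integral_Ioo, ← intervalIntegral.integral_of_le hR.le,
      intervalIntegral.integral_comp_mul_left (fun u => Real.exp u) hb.ne', integral_exp,
      mul_zero, Real.exp_zero, smul_eq_mul]
    field_simp
  have h1 : (N:ℝ)*κ*R^(N-1)*(Real.exp (b*R)-1) ≤ (N:ℝ)*κ*R^(N-1)*Real.exp (b*R) := by
    nlinarith [mul_nonneg (mul_nonneg (Nat.cast_nonneg (α:=ℝ) N) hκ0) (pow_nonneg hR.le (N-1))]
  calc (N:ℝ) * (κ * ∫ y in Set.Ioo (0:ℝ) R, y ^ (N-1) * Real.exp (b * y))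
      ≤ (N:ℝ) * (κ * ∫ y in Set.Ioo (0:ℝ) R, R ^ (N-1) * Real.exp (b * y)) :=
        mul_le_mul_of_nonneg_left (mul_le_mul_of_nonneg_left step5 hκ0) (Nat.cast_nonneg N)
    _ = (N:ℝ) * (κ * (R ^ (N-1) * ((Real.exp (b * R) - 1) / b))) := by rw [step6]
    _ = ((N:ℝ)*κ*R^(N-1)*(Real.exp (b*R)-1))/b := by ring
    _ ≤ ((N:ℝ)*κ*R^(N-1)*Real.exp (b*R))/b := by gcongr
    _ = (N:ℝ)*κ*R^(N-1)*Real.exp (b*R)/b := by ring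

set_option maxHeartbeats 1000000 in
theorem stmt_10 (N : ℕ) (hN : 1 ≤ N) (θ : ℝ) (hθ : 1 < θ) (C₁ : ℝ) (hC₁ : 1 ≤ C₁) :
    ∃ C > (1 : ℝ), ∀ lam ∈ Set.Ioo (0 : ℝ) 1,
      ∀ φ : EuclideanSpace ℝ (Fin N) → ℝ,
        (∀ x, 0 < φ x) →
        (∀ x, φ x ≤ C₁ * (1 + lam * ‖x‖) ^ (-((N : ℝ) - 1) / 2) * Real.exp (lam * ‖x‖)) →
        ∃ R₀ > (0 : ℝ), ∀ R ≥ R₀,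
          (∫ x in Metric.ball (0 : EuclideanSpace ℝ (Fin N)) R, φ x ^ θ) ≤
            C * lam ^ (-((N : ℝ) - 1) * θ / 2 - 1) *
              (1 + R) ^ ((N : ℝ) - 1 - ((N : ℝ) - 1) * θ / 2) * Real.exp (lam * θ * R) := by
  haveI : Nontrivial (EuclideanSpace ℝ (Fin N)) :=
    Module.nontrivial_of_finrank_pos (R := ℝ) (by rw [finrank_euclideanSpace_fin]; omega)
  have hdim : Module.finrank ℝ (EuclideanSpace ℝ (Fin N)) = N := finrank_euclideanSpace_fin
  have hθ0 : (0:ℝ) < θ := by linarith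
  have hN1 : (1:ℝ) ≤ (N:ℝ) := by exact_mod_cast hN
  set κ := (volume (Metric.ball (0 : EuclideanSpace ℝ (Fin N)) 1)).toReal with hκdef
  have hκ0 : 0 ≤ κ := ENNReal.toReal_nonneg
  set a : ℝ := ((N:ℝ)-1)*θ/2 with hadef
  have ha0 : 0 ≤ a := by
    have : (0:ℝ) ≤ (N:ℝ)-1 := by linarith
    positivity
  have hC₁θ : (1:ℝ) ≤ C₁ ^ θ := Real.one_le_rpow hC₁ hθ0.le
  have h2a : (1:ℝ) ≤ (2:ℝ) ^ a := Real.one_le_rpow one_le_two ha0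
  have hCco : (0:ℝ) ≤ C₁ ^ θ * κ * (1 + N * 2 ^ a) := by
    have h1 : (0:ℝ) ≤ C₁ ^ θ := by linarith
    have h2 : (0:ℝ) ≤ 1 + N * 2 ^ a := by
      have : (0:ℝ) ≤ (N:ℝ) := by linarith
      nlinarith
    positivity
  refine ⟨C₁ ^ θ * κ * (1 + N * 2 ^ a) + 2, by linarith, ?_⟩
  intro lam hlam φ hφ hbd
  obtain ⟨hl0, hl1⟩ := hlam
  set b : ℝ := lam * θ with hbdef
  have hb : 0 < b := mul_pos hl0 hθ0
  obtain ⟨R₀, hR₀1, hR₀⟩ := aux_R0 (a+1) (b/2) (by positivity)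
  refine ⟨R₀, by linarith, fun R hR => ?_⟩
  have hR1 : (1:ℝ) ≤ R := le_trans hR₀1 hR
  have hRpos : (0:ℝ) < R := by linarith
  have h1R : (0:ℝ) < 1 + R := by linarith
  rw [show -((N:ℝ)-1)*θ/2 - 1 = -a - 1 from by rw [hadef]; ring]
  set P : ℝ := (1+R) ^ ((N:ℝ)-1-a) with hPdef
  have hP0 : 0 < P := Real.rpow_pos_of_pos h1R _
  have hlamp : 0 < lam ^ (-a-1) := Real.rpow_pos_of_pos hl0 _
  have hlam_ge : 1 ≤ lam ^ (-a-1) :=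
    Real.one_le_rpow_of_pos_of_le_one_of_nonpos hl0 hl1.le (by linarith)
  have hCpos : (0:ℝ) < C₁ ^ θ * κ * (1 + N * 2 ^ a) + 2 := by linarith
  by_cases hint : IntegrableOn (fun x => φ x ^ θ)
      (Metric.ball (0 : EuclideanSpace ℝ (Fin N)) R) volume
  swap
  · rw [MeasureTheory.integral_undef hint]
    have : (0:ℝ) < (C₁ ^ θ * κ * (1 + N * 2 ^ a) + 2) * lam ^ (-a-1) * P * Real.exp (b*R) := by
      have := Real.exp_pos (b*R)
      positivity
    linarith
  -- main case
  set g : EuclideanSpace ℝ (Fin N) → ℝ :=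
    fun x => C₁ ^ θ * (1 + lam * ‖x‖) ^ (-a) * Real.exp (b * ‖x‖) with hgdef
  have hbase : ∀ x : EuclideanSpace ℝ (Fin N), 0 < 1 + lam * ‖x‖ := by
    intro x
    have : 0 ≤ lam * ‖x‖ := mul_nonneg hl0.le (norm_nonneg x)
    linarith
  have hg_cont : Continuous g := by
    have h1 : Continuous fun x : EuclideanSpace ℝ (Fin N) => 1 + lam * ‖x‖ :=
      continuous_const.add (continuous_const.mul continuous_norm)
    have h2 : Continuous fun x : EuclideanSpace ℝ (Fin N) => (1 + lam * ‖x‖) ^ (-a) :=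
      h1.rpow_const (fun x => Or.inl (hbase x).ne')
    have h3 : Continuous fun x : EuclideanSpace ℝ (Fin N) => Real.exp (b * ‖x‖) :=
      Real.continuous_exp.comp (continuous_const.mul continuous_norm)
    exact (continuous_const.mul h2).mul h3
  have hg_int : IntegrableOn g (Metric.ball (0 : EuclideanSpace ℝ (Fin N)) R) :=
    ((hg_cont.continuousOn).integrableOn_compact (isCompact_closedBall 0 R)).mono_set
      ball_subset_closedBall
  have hg_pos : ∀ x, 0 < g x := by
    intro x
    have := Real.rpow_pos_of_pos (hbase x) (-a)
    have := Real.exp_pos (b * ‖x‖)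
    rw [hgdef]
    positivity
  have hle : ∀ x ∈ Metric.ball (0 : EuclideanSpace ℝ (Fin N)) R, φ x ^ θ ≤ g x := by
    intro x _
    have h2 : φ x ^ θ ≤ (C₁ * (1 + lam * ‖x‖) ^ (-((N:ℝ)-1)/2) * Real.exp (lam * ‖x‖)) ^ θ :=
      Real.rpow_le_rpow (hφ x).le (hbd x) hθ0.le
    refine h2.trans_eq ?_
    rw [Real.mul_rpow (by positivity) (Real.exp_pos _).le,
        Real.mul_rpow (by positivity) (Real.rpow_nonneg (hbase x).le _),
        ← Real.rpow_mul (hbase x).le, ← Real.exp_mul,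
        show -((N:ℝ)-1)/2 * θ = -a from by rw [hadef]; ring,
        show lam * ‖x‖ * θ = b * ‖x‖ from by rw [hbdef]; ring, hgdef]
  have key : (∫ x in Metric.ball (0 : EuclideanSpace ℝ (Fin N)) R, φ x ^ θ) ≤
      ∫ x in Metric.ball (0 : EuclideanSpace ℝ (Fin N)) R, g x :=
    setIntegral_mono_on hint hg_int measurableSet_ball hle
  have hsub : Metric.ball (0 : EuclideanSpace ℝ (Fin N)) (R/2) ⊆
      Metric.ball (0 : EuclideanSpace ℝ (Fin N)) R := ball_subset_ball (by linarith)
  have hdiff := MeasureTheory.integral_diff (μ := volume) measurableSet_ball hg_int hsub (f := g)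
  -- volume facts
  have hvol : (volume (Metric.ball (0 : EuclideanSpace ℝ (Fin N)) R)).toReal = R ^ N * κ := by
    rw [Measure.addHaar_ball volume 0 hRpos.le, hdim, ENNReal.toReal_mul,
      ENNReal.toReal_ofReal (pow_nonneg hRpos.le N), hκdef]
  have hvol2 : (volume (Metric.ball (0 : EuclideanSpace ℝ (Fin N)) (R/2))).toReal ≤ R ^ N * κ := by
    rw [← hvol]
    exact ENNReal.toReal_mono measure_ball_lt_top.ne (measure_mono hsub)
  -- bound on small ball
  have bound1 : (∫ x in Metric.ball (0 : EuclideanSpace ℝ (Fin N)) (R/2), g x) ≤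
      R ^ N * κ * (C₁ ^ θ * Real.exp (b * (R/2))) := by
    have hconst : IntegrableOn (fun _ : EuclideanSpace ℝ (Fin N) =>
        C₁ ^ θ * Real.exp (b * (R/2))) (Metric.ball (0 : EuclideanSpace ℝ (Fin N)) (R/2)) :=
      (integrableOn_const_iff).mpr (Or.inr measure_ball_lt_top)
    have hptw : ∀ x ∈ Metric.ball (0 : EuclideanSpace ℝ (Fin N)) (R/2),
        g x ≤ C₁ ^ θ * Real.exp (b * (R/2)) := by
      intro x hx
      have hx' : ‖x‖ ≤ R/2 := (mem_ball_zero_iff.mp hx).le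
      have h1 : (1 + lam * ‖x‖) ^ (-a) ≤ 1 :=
        Real.rpow_le_one_of_one_le_of_nonpos
          (by nlinarith [mul_nonneg hl0.le (norm_nonneg x)]) (by linarith)
      have h2 : Real.exp (b * ‖x‖) ≤ Real.exp (b * (R/2)) :=
        Real.exp_le_exp.mpr (by nlinarith)
      calc g x = C₁ ^ θ * (1 + lam * ‖x‖) ^ (-a) * Real.exp (b * ‖x‖) := rfl
        _ ≤ C₁ ^ θ * 1 * Real.exp (b * (R/2)) := by
            have h3 : (0:ℝ) ≤ C₁ ^ θ := by linarith
            have h4 : 0 ≤ (1 + lam * ‖x‖) ^ (-a) := (Real.rpow_pos_of_pos (hbase x) _).le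
            have := mul_le_mul (mul_le_mul_of_nonneg_left h1 h3) h2 (Real.exp_pos _).le
              (by nlinarith)
            exact this
        _ = C₁ ^ θ * Real.exp (b * (R/2)) := by ring
    have hg_int2 : IntegrableOn g (Metric.ball (0 : EuclideanSpace ℝ (Fin N)) (R/2)) :=
      hg_int.mono_set hsub
    calc (∫ x in Metric.ball (0 : EuclideanSpace ℝ (Fin N)) (R/2), g x)
        ≤ ∫ _x in Metric.ball (0 : EuclideanSpace ℝ (Fin N)) (R/2),
            C₁ ^ θ * Real.exp (b * (R/2)) :=
          setIntegral_mono_on hg_int2 hconst measurableSet_ball hptw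
      _ = (volume (Metric.ball (0 : EuclideanSpace ℝ (Fin N)) (R/2))).toReal *
            (C₁ ^ θ * Real.exp (b * (R/2))) := by rw [setIntegral_const, smul_eq_mul]; rfl
      _ ≤ R ^ N * κ * (C₁ ^ θ * Real.exp (b * (R/2))) := by
          apply mul_le_mul_of_nonneg_right hvol2
          positivity
  -- bound on annulus
  have bound2 : (∫ x in Metric.ball (0 : EuclideanSpace ℝ (Fin N)) R \
        Metric.ball (0 : EuclideanSpace ℝ (Fin N)) (R/2), g x) ≤
      C₁ ^ θ * (1 + lam * (R/2)) ^ (-a) *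
        ((N:ℝ) * κ * R ^ (N-1) * Real.exp (b * R) / b) := by
    have hbase2 : (0:ℝ) < 1 + lam * (R/2) := by nlinarith
    set D : ℝ := C₁ ^ θ * (1 + lam * (R/2)) ^ (-a) with hDdef
    have hD0 : 0 ≤ D := by
      have := (Real.rpow_pos_of_pos hbase2 (-a)).le
      rw [hDdef]; positivity
    have hptw : ∀ x ∈ Metric.ball (0 : EuclideanSpace ℝ (Fin N)) R \
        Metric.ball (0 : EuclideanSpace ℝ (Fin N)) (R/2), g x ≤ D * Real.exp (b * ‖x‖) := by
      intro x hx
      have hx' : R/2 ≤ ‖x‖ := by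
        have := hx.2
        rw [mem_ball_zero_iff] at this
        linarith [not_lt.mp (fun h => this h)]
      have h1 : (1 + lam * ‖x‖) ^ (-a) ≤ (1 + lam * (R/2)) ^ (-a) :=
        Real.rpow_le_rpow_of_nonpos hbase2 (by nlinarith) (by linarith)
      have h3 : (0:ℝ) ≤ C₁ ^ θ := by linarith
      calc g x = C₁ ^ θ * (1 + lam * ‖x‖) ^ (-a) * Real.exp (b * ‖x‖) := rfl
        _ ≤ C₁ ^ θ * (1 + lam * (R/2)) ^ (-a) * Real.exp (b * ‖x‖) :=
            mul_le_mul_of_nonneg_right (mul_le_mul_of_nonneg_left h1 h3) (Real.exp_pos _).le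
        _ = D * Real.exp (b * ‖x‖) := by rw [hDdef]
    have hexp_cont : Continuous fun x : EuclideanSpace ℝ (Fin N) => D * Real.exp (b * ‖x‖) :=
      continuous_const.mul (Real.continuous_exp.comp (continuous_const.mul continuous_norm))
    have hexp_int : IntegrableOn (fun x : EuclideanSpace ℝ (Fin N) => D * Real.exp (b * ‖x‖))
        (Metric.ball (0 : EuclideanSpace ℝ (Fin N)) R) :=
      ((hexp_cont.continuousOn).integrableOn_compact (isCompact_closedBall 0 R)).mono_set
        ball_subset_closedBall
    have hexp_int0 : IntegrableOn (fun x : EuclideanSpace ℝ (Fin N) => Real.exp (b * ‖x‖))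
        (Metric.ball (0 : EuclideanSpace ℝ (Fin N)) R) := by
      have hc : Continuous fun x : EuclideanSpace ℝ (Fin N) => Real.exp (b * ‖x‖) :=
        Real.continuous_exp.comp (continuous_const.mul continuous_norm)
      exact ((hc.continuousOn).integrableOn_compact (isCompact_closedBall 0 R)).mono_set
        ball_subset_closedBall
    calc (∫ x in Metric.ball (0 : EuclideanSpace ℝ (Fin N)) R \
          Metric.ball (0 : EuclideanSpace ℝ (Fin N)) (R/2), g x)
        ≤ ∫ x in Metric.ball (0 : EuclideanSpace ℝ (Fin N)) R \
            Metric.ball (0 : EuclideanSpace ℝ (Fin N)) (R/2), D * Real.exp (b * ‖x‖) :=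
          setIntegral_mono_on (hg_int.mono_set diff_subset)
            (hexp_int.mono_set diff_subset) (measurableSet_ball.diff measurableSet_ball) hptw
      _ ≤ ∫ x in Metric.ball (0 : EuclideanSpace ℝ (Fin N)) R, D * Real.exp (b * ‖x‖) := by
          apply setIntegral_mono_set hexp_int
          · filter_upwards with x
            positivity
          · exact HasSubset.Subset.eventuallyLE diff_subset
      _ = D * ∫ x in Metric.ball (0 : EuclideanSpace ℝ (Fin N)) R, Real.exp (b * ‖x‖) :=
          integral_const_mul _ _
      _ ≤ D * ((N:ℝ) * κ * R ^ (N-1) * Real.exp (b * R) / b) := by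
          apply mul_le_mul_of_nonneg_left _ hD0
          exact aux_ball_exp N hN b R hb hRpos
      _ = C₁ ^ θ * (1 + lam * (R/2)) ^ (-a) *
            ((N:ℝ) * κ * R ^ (N-1) * Real.exp (b * R) / b) := by rw [hDdef]
  -- scalar estimates
  have hkey := hR₀ R hR
  have hscal1 : R ^ N * Real.exp (b * (R/2)) ≤ lam ^ (-a-1) * (P * Real.exp (b*R)) := by
    have hRN : (R:ℝ) ^ N ≤ (1+R) ^ (N:ℝ) := by
      calc R ^ N ≤ (1+R) ^ N := pow_le_pow_left₀ hRpos.le (by linarith) N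
        _ = (1+R) ^ (N:ℝ) := (Real.rpow_natCast _ N).symm
    have hsplit : (1+R) ^ (N:ℝ) = (1+R) ^ (a+1) * P := by
      rw [hPdef, ← Real.rpow_add h1R]
      congr 1
      ring
    have hPexp : 0 ≤ (1+R) ^ (a+1) := (Real.rpow_pos_of_pos h1R _).le
    have hexpmul : Real.exp (b/2 * R) * Real.exp (b * (R/2)) = Real.exp (b*R) := by
      rw [← Real.exp_add]
      congr 1
      ring
    calc R ^ N * Real.exp (b * (R/2))
        ≤ ((1+R) ^ (a+1) * P) * Real.exp (b * (R/2)) := by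
          apply mul_le_mul_of_nonneg_right _ (Real.exp_pos _).le
          rw [← hsplit]; exact hRN
      _ ≤ (Real.exp (b/2 * R) * P) * Real.exp (b * (R/2)) := by
          apply mul_le_mul_of_nonneg_right _ (Real.exp_pos _).le
          exact mul_le_mul_of_nonneg_right hkey hP0.le
      _ = P * (Real.exp (b/2 * R) * Real.exp (b * (R/2))) := by ring
      _ = P * Real.exp (b*R) := by rw [hexpmul]
      _ ≤ lam ^ (-a-1) * (P * Real.exp (b*R)) := by
          apply le_mul_of_one_le_left _ hlam_ge
          positivity
  have hscal2 : (1 + lam * (R/2)) ^ (-a) * ((N:ℝ) * κ * R ^ (N-1) * Real.exp (b * R) / b) ≤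
      (N:ℝ) * 2 ^ a * κ * (lam ^ (-a-1) * (P * Real.exp (b*R))) := by
    have hbase2 : (0:ℝ) < 1 + lam * (R/2) := by nlinarith
    have hq : lam * (1+R) / 2 ≤ 1 + lam * (R/2) := by nlinarith
    have h1 : (1 + lam * (R/2)) ^ (-a) ≤ (lam * (1+R) / 2) ^ (-a) :=
      Real.rpow_le_rpow_of_nonpos (by positivity) hq (by linarith)
    have h2 : (lam * (1+R) / 2) ^ (-a) = 2 ^ a * (lam ^ (-a) * (1+R) ^ (-a)) := by
      rw [Real.div_rpow (by positivity) (by norm_num : (0:ℝ) ≤ 2),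
          Real.mul_rpow hl0.le h1R.le, Real.rpow_neg (by norm_num : (0:ℝ) ≤ 2)]
      field_simp
    have hRN1 : R ^ (N-1) ≤ (1+R) ^ ((N:ℝ)-1) := by
      calc R ^ (N-1) ≤ (1+R) ^ (N-1) := pow_le_pow_left₀ hRpos.le (by linarith) _
        _ = (1+R) ^ (((N-1 : ℕ)):ℝ) := (Real.rpow_natCast _ _).symm
        _ = (1+R) ^ ((N:ℝ)-1) := by
            congr 1
            rw [Nat.cast_sub hN, Nat.cast_one]
    have hlamb : lam ≤ b := by
      rw [hbdef]
      nlinarith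
    have hPab : (1+R) ^ (-a) * (1+R) ^ ((N:ℝ)-1) = P := by
      rw [hPdef, ← Real.rpow_add h1R]
      congr 1
      ring
    have hlam2 : lam ^ (-a) * lam⁻¹ = lam ^ (-a-1) := by
      rw [← Real.rpow_neg_one lam, ← Real.rpow_add hl0]
      congr 1
    have hexp0 : (0:ℝ) < Real.exp (b*R) := Real.exp_pos _
    have hNκ : (0:ℝ) ≤ (N:ℝ) * κ := by positivity
    calc (1 + lam * (R/2)) ^ (-a) * ((N:ℝ) * κ * R ^ (N-1) * Real.exp (b * R) / b)
        ≤ (2 ^ a * (lam ^ (-a) * (1+R) ^ (-a))) *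
            ((N:ℝ) * κ * R ^ (N-1) * Real.exp (b * R) / b) := by
          apply mul_le_mul_of_nonneg_right (h1.trans_eq h2)
          positivity
      _ ≤ (2 ^ a * (lam ^ (-a) * (1+R) ^ (-a))) *
            ((N:ℝ) * κ * (1+R) ^ ((N:ℝ)-1) * Real.exp (b * R) / b) := by
          apply mul_le_mul_of_nonneg_left _ (by positivity)
          apply div_le_div_of_nonneg_right _ hb.le
          exact mul_le_mul_of_nonneg_right (mul_le_mul_of_nonneg_left hRN1 hNκ) hexp0.le
      _ ≤ (2 ^ a * (lam ^ (-a) * (1+R) ^ (-a))) *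
            ((N:ℝ) * κ * (1+R) ^ ((N:ℝ)-1) * Real.exp (b * R) / lam) := by
          apply mul_le_mul_of_nonneg_left _ (by positivity)
          apply div_le_div_of_nonneg_left _ hl0 hlamb
          positivity
      _ = (N:ℝ) * 2 ^ a * κ * ((lam ^ (-a) * lam⁻¹) *
            (((1+R) ^ (-a) * (1+R) ^ ((N:ℝ)-1)) * Real.exp (b*R))) := by
          rw [div_eq_mul_inv]
          ring
      _ = (N:ℝ) * 2 ^ a * κ * (lam ^ (-a-1) * (P * Real.exp (b*R))) := by
          rw [hlam2, hPab]
  -- combine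
  have hX0 : (0:ℝ) ≤ lam ^ (-a-1) * (P * Real.exp (b*R)) := by positivity
  calc (∫ x in Metric.ball (0 : EuclideanSpace ℝ (Fin N)) R, φ x ^ θ)
      ≤ ∫ x in Metric.ball (0 : EuclideanSpace ℝ (Fin N)) R, g x := key
    _ = (∫ x in Metric.ball (0 : EuclideanSpace ℝ (Fin N)) (R/2), g x) +
        (∫ x in Metric.ball (0 : EuclideanSpace ℝ (Fin N)) R \
          Metric.ball (0 : EuclideanSpace ℝ (Fin N)) (R/2), g x) := by
        rw [hdiff]; ring
    _ ≤ R ^ N * κ * (C₁ ^ θ * Real.exp (b * (R/2))) +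
        C₁ ^ θ * (1 + lam * (R/2)) ^ (-a) *
          ((N:ℝ) * κ * R ^ (N-1) * Real.exp (b * R) / b) := add_le_add bound1 bound2
    _ ≤ C₁ ^ θ * κ * (lam ^ (-a-1) * (P * Real.exp (b*R))) +
        C₁ ^ θ * ((N:ℝ) * 2 ^ a * κ * (lam ^ (-a-1) * (P * Real.exp (b*R)))) := by
        apply add_le_add
        · calc R ^ N * κ * (C₁ ^ θ * Real.exp (b * (R/2)))
              = (C₁ ^ θ * κ) * (R ^ N * Real.exp (b * (R/2))) := by ring
            _ ≤ (C₁ ^ θ * κ) * (lam ^ (-a-1) * (P * Real.exp (b*R))) := by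
                apply mul_le_mul_of_nonneg_left hscal1
                positivity
            _ = C₁ ^ θ * κ * (lam ^ (-a-1) * (P * Real.exp (b*R))) := by ring
        · calc C₁ ^ θ * (1 + lam * (R/2)) ^ (-a) *
                ((N:ℝ) * κ * R ^ (N-1) * Real.exp (b * R) / b)
              = C₁ ^ θ * ((1 + lam * (R/2)) ^ (-a) *
                ((N:ℝ) * κ * R ^ (N-1) * Real.exp (b * R) / b)) := by ring
            _ ≤ C₁ ^ θ * ((N:ℝ) * 2 ^ a * κ * (lam ^ (-a-1) * (P * Real.exp (b*R)))) := by
                apply mul_le_mul_of_nonneg_left hscal2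
                linarith
    _ = (C₁ ^ θ * κ * (1 + N * 2 ^ a)) * (lam ^ (-a-1) * (P * Real.exp (b*R))) := by ring
    _ ≤ (C₁ ^ θ * κ * (1 + N * 2 ^ a) + 2) * (lam ^ (-a-1) * (P * Real.exp (b*R))) := by
        apply mul_le_mul_of_nonneg_right _ hX0
        linarith
    _ = (C₁ ^ θ * κ * (1 + N * 2 ^ a) + 2) * lam ^ (-a-1) * P * Real.exp (b*R) := by ring
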